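/- For any edge 2-coloring of the complete graph K_t in which the edge set is partitioned as follows: there are sets A, B with A ∪ B = [t], all edges inside A are red, all edges inside B are blue, and edges between A and B are colored arbitrarily — the number of monochromatic triangles is at least (7/16 − 2/t)·C(t,3). -/

import Mathlib

open Finset

lemma aux_cc3 (n : ℕ) : ((n.choose 3 : ℕ) : ℝ) = n*(n-1)*(n-2)/6 := by
  induction n with
  | zero => norm_num
  | succ n ih =>
    rw [Nat.choose_succ_succ]
    push_cast
    rw [ih, Nat.cast_choose_two]
    ring

lemma aux_engel (a b Rr Ss QA QB : ℝ) (ha : 0 ≤ a) (hb : 0 ≤ b)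
    (hRr : 0 ≤ Rr) (hSs : 0 ≤ Ss)
    (h1 : Rr^2 ≤ b*QB) (h2 : Ss^2 ≤ a*QA) (hQA : 0 ≤ QA) (hQB : 0 ≤ QB) :
    (Rr + Ss)^2 ≤ (a+b)*(QA+QB) := by
  rcases eq_or_lt_of_le ha with ha0 | ha
  · have : Ss = 0 := by nlinarith
    nlinarith
  rcases eq_or_lt_of_le hb with hb0 | hb
  · have : Rr = 0 := by nlinarith
    nlinarith
  have e1 : (a+b)*a*Rr^2 ≤ (a+b)*a*(b*QB) := by
    have : (0:ℝ) ≤ (a+b)*a := by positivity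
    exact mul_le_mul_of_nonneg_left h1 this
  have e2 : (a+b)*b*Ss^2 ≤ (a+b)*b*(a*QA) := by
    have : (0:ℝ) ≤ (a+b)*b := by positivity
    exact mul_le_mul_of_nonneg_left h2 this
  have key : a*b*((Rr+Ss)^2) ≤ a*b*((a+b)*(QA+QB)) := by
    nlinarith [sq_nonneg (a*Rr - b*Ss)]
  have hab : 0 < a*b := by positivity
  exact le_of_mul_le_mul_left key hab

lemma aux_final (t a b s Q mono : ℝ) (ht : 4 ≤ t) (hab : a + b = t)
    (ha : 0 ≤ a) (hb : 0 ≤ b) (hs : s = a*b) (hQ : s^2 ≤ t*Q) (hQ0 : 0 ≤ Q)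
    (hmono : (a^3-3*a^2+2*a)/6 + (b^3-3*b^2+2*b)/6 + (Q - s)/2 ≤ mono) :
    (7/16 - 2/t) * (t*(t-1)*(t-2)/6) ≤ mono := by
  have ht0 : (0:ℝ) < t := by linarith
  have hrw : (7/16 - 2/t) * (t*(t-1)*(t-2)/6) = (7*t-32)*(t-1)*(t-2)/96 := by
    field_simp
    ring
  rw [hrw]
  have h4s : 4*s ≤ t^2 := by nlinarith [sq_nonneg (a-b)]
  have hs0 : 0 ≤ s := by nlinarith
  have e1 : (0:ℝ) ≤ t^2 - 4*s := by linarith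
  have e2 : (0:ℝ) ≤ 3*t^2 - 4*t - 4*s := by
    nlinarith [mul_nonneg (by linarith : (0:ℝ) ≤ t - 4) (by linarith : (0:ℝ) ≤ t)]
  have hprod : 0 ≤ (t^2 - 4*s) * (3*t^2 - 4*t - 4*s) := mul_nonneg e1 e2
  have h17' : (0:ℝ) ≤ (t-4)*(17*t-10) := mul_nonneg (by linarith) (by linarith)
  have h17 : 0 ≤ t*(17*t^2 - 78*t + 64) := mul_nonneg (le_of_lt ht0) (by nlinarith)
  have hmono' : (t^3-3*t*s-3*t^2+6*s+2*t)/6 + (Q-s)/2 ≤ mono := by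
    have hcube : (a^3-3*a^2+2*a)/6 + (b^3-3*b^2+2*b)/6
        = (t^3-3*t*s-3*t^2+6*s+2*t)/6 := by rw [hs, ← hab]; ring
    linarith [hcube ▸ hmono]
  have hmt : ((t^3-3*t*s-3*t^2+6*s+2*t)/6 + (Q-s)/2) * t ≤ mono * t :=
    mul_le_mul_of_nonneg_right hmono' (le_of_lt ht0)
  have key : (7*t-32)*(t-1)*(t-2)/96 * t ≤ mono * t := by nlinarith [hmt, hprod, h17, hQ]
  exact le_of_mul_le_mul_right key ht0

lemma aux_small (t : ℕ) (x : ℝ) (hx : 0 ≤ x) (hsmall : t < 4) :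
    (7/16 - 2/(t : ℝ)) * (t.choose 3) ≤ x := by
  rcases Nat.eq_zero_or_pos t with rfl | htpos
  · simpa using hx
  · have h1 : (0:ℝ) < t := by exact_mod_cast htpos
    have h3 : (t:ℝ) ≤ 3 := by exact_mod_cast (by omega : t ≤ 3)
    have h23 : (2:ℝ)/3 ≤ 2/t := div_le_div_of_nonneg_left (by norm_num) h1 h3
    have hcoef : (7/16 - 2/(t:ℝ)) ≤ 0 := by linarith
    exact le_trans (mul_nonpos_of_nonpos_of_nonneg hcoef (Nat.cast_nonneg _)) hx

lemma aux_pairs (t : ℕ) (c : Fin t → Fin t → Bool) (hsymm : ∀ i j, c i j = c j i)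
    (A B : Finset (Fin t)) :
    (∑ w ∈ B, (A.filter fun u => c w u = true).card)
      + (∑ u ∈ A, (B.filter fun w => c u w = false).card) = B.card * A.card := by
  have h2 : (∑ u ∈ A, (B.filter fun w => c u w = false).card)
      = ∑ w ∈ B, (A.filter fun u => c w u = false).card := by
    calc (∑ u ∈ A, (B.filter fun w => c u w = false).card)
        = ∑ u ∈ A, ∑ w ∈ B, (if c u w = false then 1 else 0) :=
          sum_congr rfl fun u _ => card_filter _ _
      _ = ∑ w ∈ B, ∑ u ∈ A, (if c u w = false then 1 else 0) := sum_comm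
      _ = ∑ w ∈ B, ∑ u ∈ A, (if c w u = false then 1 else 0) :=
          sum_congr rfl fun w _ => sum_congr rfl fun u _ => by rw [hsymm u w]
      _ = ∑ w ∈ B, (A.filter fun u => c w u = false).card :=
          sum_congr rfl fun w _ => (card_filter _ _).symm
  rw [h2, ← sum_add_distrib]
  have h3 : ∀ w, (A.filter fun u => c w u = true).card
      + (A.filter fun u => c w u = false).card = A.card := by
    intro w
    have := card_filter_add_card_filter_not (s := A) (p := fun u => c w u = true)
    rwa [filter_congr (fun u _ => by simp : ∀ u ∈ A,
      (¬ (c w u = true)) ↔ (c w u = false))] at this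
  rw [sum_congr rfl fun w _ => h3 w, sum_const, smul_eq_mul]


lemma aux_count (t : ℕ) (c : Fin t → Fin t → Bool) (hsymm : ∀ i j, c i j = c j i)
    (A B : Finset (Fin t)) (hd : Disjoint A B)
    (hA : ∀ i ∈ A, ∀ j ∈ A, i ≠ j → c i j = true)
    (hB : ∀ i ∈ B, ∀ j ∈ B, i ≠ j → c i j = false)
    (ht : 0 < t) :
    A.card.choose 3 + B.card.choose 3
      + (∑ w ∈ B, (A.filter fun u => c w u = true).card.choose 2)
      + (∑ u ∈ A, (B.filter fun w => c u w = false).card.choose 2)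
      ≤ (Finset.univ.filter fun x : Fin t × Fin t × Fin t =>
          x.1 < x.2.1 ∧ x.2.1 < x.2.2 ∧
          c x.1 x.2.1 = c x.1 x.2.2 ∧ c x.1 x.2.1 = c x.2.1 x.2.2).card := by
  classical
  set T := (Finset.univ.filter fun x : Fin t × Fin t × Fin t =>
          x.1 < x.2.1 ∧ x.2.1 < x.2.2 ∧
          c x.1 x.2.1 = c x.1 x.2.2 ∧ c x.1 x.2.1 = c x.2.1 x.2.2) with hT
  set Col : Finset (Fin t) → Bool → Prop :=
    fun s v => ∀ i ∈ s, ∀ j ∈ s, i ≠ j → c i j = v with hCol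
  set M1 := A.powersetCard 3 with hM1def
  set M2 := B.powersetCard 3 with hM2def
  set M3 := ((B.sigma fun w => (A.filter fun u => c w u = true).powersetCard 2).image
      fun p => insert p.1 p.2) with hM3def
  set M4 := ((A.sigma fun u => (B.filter fun w => c u w = false).powersetCard 2).image
      fun p => insert p.1 p.2) with hM4def
  -- facts about members
  have hM1 : ∀ s ∈ M1, s.card = 3 ∧ (s ∩ A).card = 3 ∧ Col s true := by
    intro s hs
    rw [hM1def, mem_powersetCard] at hs
    obtain ⟨hsub, hcard⟩ := hs
    refine ⟨hcard, ?_, ?_⟩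
    · rw [inter_eq_left.2 hsub, hcard]
    · intro i hi j hj hne
      exact hA i (hsub hi) j (hsub hj) hne
  have hM2 : ∀ s ∈ M2, s.card = 3 ∧ (s ∩ A).card = 0 ∧ Col s false := by
    intro s hs
    rw [hM2def, mem_powersetCard] at hs
    obtain ⟨hsub, hcard⟩ := hs
    refine ⟨hcard, ?_, ?_⟩
    · have : s ∩ A = ∅ := by
        apply eq_empty_of_forall_notMem
        intro x hx
        rw [mem_inter] at hx
        exact (hd.symm.forall_ne_finset (hsub hx.1) hx.2) rfl
      rw [this]; rfl
    · intro i hi j hj hne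
      exact hB i (hsub hi) j (hsub hj) hne
  have hM3 : ∀ s ∈ M3, s.card = 3 ∧ (s ∩ A).card = 2 ∧ Col s true := by
    intro s hs
    rw [hM3def, mem_image] at hs
    obtain ⟨p, hp, rfl⟩ := hs
    rw [mem_sigma] at hp
    obtain ⟨hw, hp2⟩ := hp
    rw [mem_powersetCard] at hp2
    obtain ⟨hsub, hcard⟩ := hp2
    have hsubA : p.2 ⊆ A := hsub.trans (filter_subset _ _)
    have hwA : p.1 ∉ A := fun h => (hd.forall_ne_finset h hw) rfl
    have hwp2 : p.1 ∉ p.2 := fun h => hwA (hsubA h)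
    refine ⟨?_, ?_, ?_⟩
    · rw [card_insert_of_notMem hwp2, hcard]
    · rw [insert_inter_of_notMem hwA, inter_eq_left.2 hsubA, hcard]
    · intro i hi j hj hne
      rw [mem_insert] at hi hj
      rcases hi with rfl | hi
      · rcases hj with rfl | hj
        · exact absurd rfl hne
        · exact (mem_filter.1 (hsub hj)).2
      · rcases hj with rfl | hj
        · rw [hsymm]; exact (mem_filter.1 (hsub hi)).2
        · exact hA i (hsubA hi) j (hsubA hj) hne
  have hM4 : ∀ s ∈ M4, s.card = 3 ∧ (s ∩ A).card = 1 ∧ Col s false := by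
    intro s hs
    rw [hM4def, mem_image] at hs
    obtain ⟨p, hp, rfl⟩ := hs
    rw [mem_sigma] at hp
    obtain ⟨hu, hp2⟩ := hp
    rw [mem_powersetCard] at hp2
    obtain ⟨hsub, hcard⟩ := hp2
    have hsubB : p.2 ⊆ B := hsub.trans (filter_subset _ _)
    have hup2 : p.1 ∉ p.2 := fun h => (hd.forall_ne_finset hu (hsubB h)) rfl
    refine ⟨?_, ?_, ?_⟩
    · rw [card_insert_of_notMem hup2, hcard]
    · have h1 : p.2 ∩ A = ∅ := by
        apply eq_empty_of_forall_notMem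
        intro x hx
        rw [mem_inter] at hx
        exact (hd.symm.forall_ne_finset (hsubB hx.1) hx.2) rfl
      rw [insert_inter_of_mem hu, h1]
      rfl
    · intro i hi j hj hne
      rw [mem_insert] at hi hj
      rcases hi with rfl | hi
      · rcases hj with rfl | hj
        · exact absurd rfl hne
        · exact (mem_filter.1 (hsub hj)).2
      · rcases hj with rfl | hj
        · rw [hsymm]; exact (mem_filter.1 (hsub hi)).2
        · exact hB i (hsubB hi) j (hsubB hj) hne
  -- Good
  set Good := M1 ∪ M2 ∪ M3 ∪ M4 with hGoodDef
  have hGood : ∀ s ∈ Good, s.card = 3 ∧ ∃ v, Col s v := by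
    intro s hs
    rw [hGoodDef, mem_union, mem_union, mem_union] at hs
    rcases hs with ((h | h) | h) | h
    · exact ⟨(hM1 s h).1, true, (hM1 s h).2.2⟩
    · exact ⟨(hM2 s h).1, false, (hM2 s h).2.2⟩
    · exact ⟨(hM3 s h).1, true, (hM3 s h).2.2⟩
    · exact ⟨(hM4 s h).1, false, (hM4 s h).2.2⟩
  -- cards
  have cM1 : M1.card = A.card.choose 3 := by rw [hM1def, card_powersetCard]
  have cM2 : M2.card = B.card.choose 3 := by rw [hM2def, card_powersetCard]
  have cM3 : M3.card = ∑ w ∈ B, (A.filter fun u => c w u = true).card.choose 2 := by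
    rw [hM3def, card_image_of_injOn, card_sigma]
    · exact sum_congr rfl fun w _ => card_powersetCard _ _
    · intro p hp q hq heq
      simp only [mem_coe, mem_sigma, mem_powersetCard] at hp hq
      have heq' : insert p.1 p.2 = insert q.1 q.2 := heq
      have h1 : p.1 = q.1 := by
        have hpB : ∀ x ∈ insert p.1 p.2, x ∈ B → x = p.1 := by
          intro x hx hxB
          rcases mem_insert.1 hx with rfl | hx
          · rfl
          · exact absurd hxB (fun h => (hd.forall_ne_finset
              ((hp.2.1.trans (filter_subset _ _)) hx) h) rfl)
        have : q.1 ∈ insert p.1 p.2 := heq' ▸ mem_insert_self _ _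
        exact (hpB q.1 this hq.1).symm
      have hp2 : p.1 ∉ p.2 := fun h => (hd.forall_ne_finset
        ((hp.2.1.trans (filter_subset _ _)) h) hp.1) rfl
      have hq2 : q.1 ∉ q.2 := fun h => (hd.forall_ne_finset
        ((hq.2.1.trans (filter_subset _ _)) h) hq.1) rfl
      have h2 : p.2 = q.2 := by
        have e1 : (insert p.1 p.2).erase p.1 = p.2 := erase_insert hp2
        have e2 : (insert q.1 q.2).erase q.1 = q.2 := erase_insert hq2
        rw [← e1, ← e2, heq', h1]
      exact Sigma.ext h1 (heq_of_eq h2)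
  have cM4 : M4.card = ∑ u ∈ A, (B.filter fun w => c u w = false).card.choose 2 := by
    rw [hM4def, card_image_of_injOn, card_sigma]
    · exact sum_congr rfl fun w _ => card_powersetCard _ _
    · intro p hp q hq heq
      simp only [mem_coe, mem_sigma, mem_powersetCard] at hp hq
      have heq' : insert p.1 p.2 = insert q.1 q.2 := heq
      have h1 : p.1 = q.1 := by
        have hpA : ∀ x ∈ insert p.1 p.2, x ∈ A → x = p.1 := by
          intro x hx hxA
          rcases mem_insert.1 hx with rfl | hx
          · rfl
          · exact absurd hxA (fun h => (hd.symm.forall_ne_finset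
              ((hp.2.1.trans (filter_subset _ _)) hx) h) rfl)
        have : q.1 ∈ insert p.1 p.2 := heq' ▸ mem_insert_self _ _
        exact (hpA q.1 this hq.1).symm
      have hp2 : p.1 ∉ p.2 := fun h => (hd.forall_ne_finset hp.1
        ((hp.2.1.trans (filter_subset _ _)) h)) rfl
      have hq2 : q.1 ∉ q.2 := fun h => (hd.forall_ne_finset hq.1
        ((hq.2.1.trans (filter_subset _ _)) h)) rfl
      have h2 : p.2 = q.2 := by
        have e1 : (insert p.1 p.2).erase p.1 = p.2 := erase_insert hp2
        have e2 : (insert q.1 q.2).erase q.1 = q.2 := erase_insert hq2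
        rw [← e1, ← e2, heq', h1]
      exact Sigma.ext h1 (heq_of_eq h2)
  -- disjointness
  have hd12 : Disjoint M1 M2 := by
    rw [disjoint_left]; intro s h1 h2
    have := (hM1 s h1).2.1; have := (hM2 s h2).2.1; omega
  have hd13 : Disjoint M1 M3 := by
    rw [disjoint_left]; intro s h1 h2
    have := (hM1 s h1).2.1; have := (hM3 s h2).2.1; omega
  have hd23 : Disjoint M2 M3 := by
    rw [disjoint_left]; intro s h1 h2
    have := (hM2 s h1).2.1; have := (hM3 s h2).2.1; omega
  have hd14 : Disjoint M1 M4 := by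
    rw [disjoint_left]; intro s h1 h2
    have := (hM1 s h1).2.1; have := (hM4 s h2).2.1; omega
  have hd24 : Disjoint M2 M4 := by
    rw [disjoint_left]; intro s h1 h2
    have := (hM2 s h1).2.1; have := (hM4 s h2).2.1; omega
  have hd34 : Disjoint M3 M4 := by
    rw [disjoint_left]; intro s h1 h2
    have := (hM3 s h1).2.1; have := (hM4 s h2).2.1; omega
  have cGood : Good.card = M1.card + M2.card + M3.card + M4.card := by
    rw [hGoodDef, card_union_of_disjoint, card_union_of_disjoint, card_union_of_disjoint]
    · exact hd12
    · exact disjoint_union_left.2 ⟨hd13, hd23⟩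
    · exact disjoint_union_left.2 ⟨disjoint_union_left.2 ⟨hd14, hd24⟩, hd34⟩
  -- injection into T
  set f : Finset (Fin t) → Fin t × Fin t × Fin t := fun s =>
    if h : s.card = 3 then
      (s.orderEmbOfFin h ⟨0, by omega⟩, s.orderEmbOfFin h ⟨1, by omega⟩,
        s.orderEmbOfFin h ⟨2, by omega⟩)
    else (⟨0, ht⟩, ⟨0, ht⟩, ⟨0, ht⟩) with hfdef
  have hrepr : ∀ (s : Finset (Fin t)) (h : s.card = 3),
      s = {s.orderEmbOfFin h ⟨0, by omega⟩, s.orderEmbOfFin h ⟨1, by omega⟩,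
        s.orderEmbOfFin h ⟨2, by omega⟩} := by
    intro s h
    have hmono := (s.orderEmbOfFin h).strictMono
    have h01 : s.orderEmbOfFin h ⟨0, by omega⟩ < s.orderEmbOfFin h ⟨1, by omega⟩ :=
      hmono (by simp [Fin.lt_def])
    have h12 : s.orderEmbOfFin h ⟨1, by omega⟩ < s.orderEmbOfFin h ⟨2, by omega⟩ :=
      hmono (by simp [Fin.lt_def])
    have hsub : ({s.orderEmbOfFin h ⟨0, by omega⟩, s.orderEmbOfFin h ⟨1, by omega⟩,
        s.orderEmbOfFin h ⟨2, by omega⟩} : Finset (Fin t)) ⊆ s := by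
      intro x hx
      simp only [mem_insert, mem_singleton] at hx
      rcases hx with rfl | rfl | rfl <;> exact s.orderEmbOfFin_mem h _
    have hc : ({s.orderEmbOfFin h ⟨0, by omega⟩, s.orderEmbOfFin h ⟨1, by omega⟩,
        s.orderEmbOfFin h ⟨2, by omega⟩} : Finset (Fin t)).card = 3 := by
      rw [card_insert_of_notMem (by simp [ne_of_lt h01, ne_of_lt (lt_trans h01 h12)]),
        card_insert_of_notMem (by simp [ne_of_lt h12]), card_singleton]
    exact (Finset.eq_of_subset_of_card_le hsub (by rw [h, hc])).symm
  have hmaps : ∀ s ∈ Good, f s ∈ T := by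
    intro s hs
    obtain ⟨h3, v, hcol⟩ := hGood s hs
    rw [hfdef]
    simp only [dif_pos h3]
    rw [hT, mem_filter]
    have hmono := (s.orderEmbOfFin h3).strictMono
    have h01 : s.orderEmbOfFin h3 ⟨0, by omega⟩ < s.orderEmbOfFin h3 ⟨1, by omega⟩ :=
      hmono (by simp [Fin.lt_def])
    have h12 : s.orderEmbOfFin h3 ⟨1, by omega⟩ < s.orderEmbOfFin h3 ⟨2, by omega⟩ :=
      hmono (by simp [Fin.lt_def])
    have h02 : s.orderEmbOfFin h3 ⟨0, by omega⟩ < s.orderEmbOfFin h3 ⟨2, by omega⟩ :=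
      lt_trans h01 h12
    have m0 := s.orderEmbOfFin_mem h3 ⟨0, by omega⟩
    have m1 := s.orderEmbOfFin_mem h3 ⟨1, by omega⟩
    have m2 := s.orderEmbOfFin_mem h3 ⟨2, by omega⟩
    refine ⟨mem_univ _, h01, h12, ?_, ?_⟩
    · rw [hcol _ m0 _ m1 (ne_of_lt h01), hcol _ m0 _ m2 (ne_of_lt h02)]
    · rw [hcol _ m0 _ m1 (ne_of_lt h01), hcol _ m1 _ m2 (ne_of_lt h12)]
  have hinj : Set.InjOn f Good := by
    intro s hs s' hs' heq
    obtain ⟨h3, -⟩ := hGood s hs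
    obtain ⟨h3', -⟩ := hGood s' hs'
    rw [hfdef] at heq
    simp only [dif_pos h3, dif_pos h3', Prod.mk.injEq] at heq
    rw [hrepr s h3, hrepr s' h3', heq.1, heq.2.1, heq.2.2]
  calc A.card.choose 3 + B.card.choose 3
      + (∑ w ∈ B, (A.filter fun u => c w u = true).card.choose 2)
      + (∑ u ∈ A, (B.filter fun w => c u w = false).card.choose 2)
      = Good.card := by rw [cGood, cM1, cM2, cM3, cM4]
    _ ≤ T.card := card_le_card_of_injOn f hmaps hinj

theorem stmt13 (t : ℕ) (c : Fin t → Fin t → Bool)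
    (hsymm : ∀ i j, c i j = c j i)
    (A B : Finset (Fin t)) (hAB : A ∪ B = Finset.univ)
    (hA : ∀ i ∈ A, ∀ j ∈ A, i ≠ j → c i j = true)
    (hB : ∀ i ∈ B, ∀ j ∈ B, i ≠ j → c i j = false) :
    ((Finset.univ.filter fun x : Fin t × Fin t × Fin t =>
        x.1 < x.2.1 ∧ x.2.1 < x.2.2 ∧
        c x.1 x.2.1 = c x.1 x.2.2 ∧ c x.1 x.2.1 = c x.2.1 x.2.2).card : ℝ)
      ≥ (7/16 - 2/(t : ℝ)) * (t.choose 3) := by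
  classical
  rw [ge_iff_le]
  rcases lt_or_ge t 4 with hsmall | ht4
  · exact aux_small t _ (Nat.cast_nonneg _) hsmall
  · set B' := B \ A with hB'def
    have hdisj : Disjoint A B' := disjoint_sdiff
    have hU : A ∪ B' = univ := by rw [hB'def, union_sdiff_self_eq_union, hAB]
    have hB'c : ∀ i ∈ B', ∀ j ∈ B', i ≠ j → c i j = false :=
      fun i hi j hj => hB i (sdiff_subset hi) j (sdiff_subset hj)
    have habn : A.card + B'.card = t := by
      rw [← card_union_of_disjoint hdisj, hU, card_univ]
      simp
    have hcount := aux_count t c hsymm A B' hdisj hA hB'c (by omega)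
    set a : ℝ := (A.card : ℝ) with hadef
    set b : ℝ := (B'.card : ℝ) with hbdef
    set r : Fin t → ℝ := fun w => ((A.filter fun u => c w u = true).card : ℝ) with hrdef
    set q : Fin t → ℝ := fun u => ((B'.filter fun w => c u w = false).card : ℝ) with hqdef
    have hRS : (∑ w ∈ B', r w) + (∑ u ∈ A, q u) = b * a := by
      have h := aux_pairs t c hsymm A B'
      rw [hrdef, hqdef, hadef, hbdef]
      beta_reduce
      exact_mod_cast congrArg (Nat.cast : ℕ → ℝ) h
    have hCB : (∑ w ∈ B', r w)^2 ≤ b * (∑ w ∈ B', (r w)^2) :=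
      sq_sum_le_card_mul_sum_sq (s := B') (f := r)
    have hCA : (∑ u ∈ A, q u)^2 ≤ a * (∑ u ∈ A, (q u)^2) :=
      sq_sum_le_card_mul_sum_sq (s := A) (f := q)
    have hRr0 : 0 ≤ ∑ w ∈ B', r w := sum_nonneg fun w _ => by
      rw [hrdef]; exact Nat.cast_nonneg _
    have hSs0 : 0 ≤ ∑ u ∈ A, q u := sum_nonneg fun u _ => by
      rw [hqdef]; exact Nat.cast_nonneg _
    have hQB0 : 0 ≤ ∑ w ∈ B', (r w)^2 := sum_nonneg fun w _ => sq_nonneg _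
    have hQA0 : 0 ≤ ∑ u ∈ A, (q u)^2 := sum_nonneg fun u _ => sq_nonneg _
    have ha0 : 0 ≤ a := Nat.cast_nonneg _
    have hb0 : 0 ≤ b := Nat.cast_nonneg _
    have hengel := aux_engel a b (∑ w ∈ B', r w) (∑ u ∈ A, q u)
      (∑ u ∈ A, (q u)^2) (∑ w ∈ B', (r w)^2) ha0 hb0 hRr0 hSs0 hCB hCA hQA0 hQB0
    have hsumB : (∑ w ∈ B', ((A.filter fun u => c w u = true).card.choose 2 : ℝ))
        = ((∑ w ∈ B', (r w)^2) - ∑ w ∈ B', r w)/2 := by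
      calc (∑ w ∈ B', ((A.filter fun u => c w u = true).card.choose 2 : ℝ))
          = ∑ w ∈ B', ((r w)^2 - r w)/2 := sum_congr rfl fun w _ => by
            rw [Nat.cast_choose_two, hrdef]; ring
        _ = ((∑ w ∈ B', (r w)^2) - ∑ w ∈ B', r w)/2 := by
            rw [← sum_div, sum_sub_distrib]
    have hsumA : (∑ u ∈ A, ((B'.filter fun w => c u w = false).card.choose 2 : ℝ))
        = ((∑ u ∈ A, (q u)^2) - ∑ u ∈ A, q u)/2 := by
      calc (∑ u ∈ A, ((B'.filter fun w => c u w = false).card.choose 2 : ℝ))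
          = ∑ u ∈ A, ((q u)^2 - q u)/2 := sum_congr rfl fun u _ => by
            rw [Nat.cast_choose_two, hqdef]; ring
        _ = ((∑ u ∈ A, (q u)^2) - ∑ u ∈ A, q u)/2 := by
            rw [← sum_div, sum_sub_distrib]
    have hcast := (Nat.cast_le (α := ℝ)).2 hcount
    push_cast at hcast
    have e1 : ((A.card.choose 3 : ℕ):ℝ) = (a^3 - 3*a^2 + 2*a)/6 := by
      rw [aux_cc3, hadef]; ring
    have e2 : ((B'.card.choose 3 : ℕ):ℝ) = (b^3 - 3*b^2 + 2*b)/6 := by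
      rw [aux_cc3, hbdef]; ring
    rw [aux_cc3]
    refine aux_final (t:ℝ) a b (a*b)
      ((∑ u ∈ A, (q u)^2) + (∑ w ∈ B', (r w)^2)) _
      (by exact_mod_cast ht4) (by rw [hadef, hbdef]; exact_mod_cast habn) ha0 hb0 rfl ?_
      (by linarith) ?_
    · calc (a*b)^2 = ((∑ w ∈ B', r w) + (∑ u ∈ A, q u))^2 := by rw [hRS]; ring
        _ ≤ (a+b)*((∑ u ∈ A, (q u)^2) + (∑ w ∈ B', (r w)^2)) := hengel
        _ = (t:ℝ)*((∑ u ∈ A, (q u)^2) + (∑ w ∈ B', (r w)^2)) := by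
            rw [show a + b = (t:ℝ) by rw [hadef, hbdef]; exact_mod_cast habn]
    · rw [← e1, ← e2]
      have hrw2 : (∑ w ∈ B', ((A.filter fun u => c w u = true).card.choose 2 : ℝ))
          + (∑ u ∈ A, ((B'.filter fun w => c u w = false).card.choose 2 : ℝ))
          = (((∑ u ∈ A, (q u)^2) + (∑ w ∈ B', (r w)^2)) - a*b)/2 := by
        rw [hsumB, hsumA]
        have : (∑ w ∈ B', r w) + (∑ u ∈ A, q u) = a * b := by rw [hRS]; ring
        linarith
      linarith [hcast, hrw2]
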